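/- Let φ be a continuous flow on a connected locally compact, locally connected metric space M, and let K be an isolated attractor with only internal explosions that is purely unstable (its basin equals its stabilization: A(K) = K̂). Then K is a global attractor (A(K) = M) and M is compact. -/

import Mathlib

open Set

variable {M : Type} [TopologicalSpace M]

/-- The image set `A · S = {φ(x,t) : x ∈ A, t ∈ S}` of a set of points and a set of
times under a flow. -/
def flowImage (φ : Flow ℝ M) (A : Set M) (S : Set ℝ) : Set M :=
  {y | ∃ x ∈ A, ∃ t ∈ S, φ t x = y}

/-- `U` is an open neighbourhood of `x` in `A`, i.e. a relatively open subset of `A`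
containing `x`. -/
def IsRelOpenNbhd (A : Set M) (x : M) (U : Set M) : Prop :=
  x ∈ U ∧ ∃ V : Set M, IsOpen V ∧ U = V ∩ A

/-- The positive prolongational limit set of `x` relative to `A`:
`J⁺(x, A) = ⋂_{U, t ≥ 0} closure (U · [t, ∞))`, `U` ranging over the open
neighbourhoods of `x` in `A`. -/
def jPlusRel (φ : Flow ℝ M) (A : Set M) (x : M) : Set M :=
  ⋂ (U : Set M) (_ : IsRelOpenNbhd A x U) (t : ℝ) (_ : 0 ≤ t),
    closure (flowImage φ U (Ici t))

/-- The positive prolongational limit set `J⁺(x) = J⁺(x, M)`. -/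
def jPlus (φ : Flow ℝ M) (x : M) : Set M := jPlusRel φ univ x

/-- The negative prolongational limit set of `x` relative to `A`:
`J⁻(x, A) = ⋂_{U, t ≥ 0} closure (U · (-∞, -t])`. -/
def jMinusRel (φ : Flow ℝ M) (A : Set M) (x : M) : Set M :=
  ⋂ (U : Set M) (_ : IsRelOpenNbhd A x U) (t : ℝ) (_ : 0 ≤ t),
    closure (flowImage φ U (Iic (-t)))

/-- The negative prolongational limit set `J⁻(x) = J⁻(x, M)`. -/
def jMinus (φ : Flow ℝ M) (x : M) : Set M := jMinusRel φ univ x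

/-- The omega limit set `ω(x) = ⋂_t closure (x · [t, ∞))`. -/
def omegaSet (φ : Flow ℝ M) (x : M) : Set M :=
  ⋂ t : ℝ, closure (flowImage φ {x} (Ici t))

/-- The alpha limit set `α(x) = ⋂_t closure (x · (-∞, t])`. -/
def alphaSet (φ : Flow ℝ M) (x : M) : Set M :=
  ⋂ t : ℝ, closure (flowImage φ {x} (Iic t))

/-- A set is invariant under the flow. -/
def FlowInvariant (φ : Flow ℝ M) (K : Set M) : Prop :=
  ∀ t : ℝ, ∀ x ∈ K, φ t x ∈ K

/-- The stable manifold `W^s(K) = {x : ∅ ≠ ω(x) ⊆ K}`; for an attractor this is its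
basin of attraction `𝒜(K)`. -/
def stableSet (φ : Flow ℝ M) (K : Set M) : Set M :=
  {x | (omegaSet φ x).Nonempty ∧ omegaSet φ x ⊆ K}

/-- The unstable manifold `W^u(K) = {x : ∅ ≠ α(x) ⊆ K}`. -/
def unstableSet (φ : Flow ℝ M) (K : Set M) : Set M :=
  {x | (alphaSet φ x).Nonempty ∧ alphaSet φ x ⊆ K}

/-- `K` is an isolated compact invariant set: it has a compact neighbourhood `N` in
which it is the maximal invariant set. -/
def IsIsolatedInvariant (φ : Flow ℝ M) (K : Set M) : Prop :=
  IsCompact K ∧ FlowInvariant φ K ∧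
    ∃ N : Set M, IsCompact N ∧ N ∈ nhdsSet K ∧ K = {x ∈ N | ∀ t : ℝ, φ t x ∈ N}

/-- `K` is an isolated attractor: an isolated compact invariant set whose stable
manifold is a neighbourhood of it. -/
def IsIsolatedAttractor (φ : Flow ℝ M) (K : Set M) : Prop :=
  IsIsolatedInvariant φ K ∧ stableSet φ K ∈ nhdsSet K

/-- The stabilization `K̂ = ⋃_{x ∈ K} J⁺(x)` of an attractor `K`, the smallest stable
attractor containing `K`. -/
def stabilization (φ : Flow ℝ M) (K : Set M) : Set M :=
  ⋃ x ∈ K, jPlus φ x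

/-- `K` has only internal explosions (no external explosions): every explosion point
of the basin of attraction lies in `K`. -/
def OnlyInternalExplosions (φ : Flow ℝ M) (K : Set M) : Prop :=
  ∀ x ∈ stableSet φ K \ K, jPlus φ x ⊆ K


section AuxLemmas

variable {M : Type} [TopologicalSpace M]

lemma isRelOpenNbhd_univ {V : Set M} {x : M} (hV : IsOpen V) (hx : x ∈ V) :
    IsRelOpenNbhd (univ : Set M) x V :=
  ⟨hx, V, hV, (inter_univ V).symm⟩

lemma jPlus_subset_closure {φ : Flow ℝ M} {x : M} {V : Set M} (hV : IsOpen V)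
    (hx : x ∈ V) {t : ℝ} (ht : 0 ≤ t) :
    jPlus φ x ⊆ closure (flowImage φ V (Ici t)) := by
  intro y hy
  simp only [jPlus, jPlusRel, mem_iInter] at hy
  exact hy V (isRelOpenNbhd_univ hV hx) t ht

lemma exists_forward_mem {φ : Flow ℝ M} {x p : M} (hp : p ∈ omegaSet φ x)
    {V : Set M} (hV : IsOpen V) (hpV : p ∈ V) (t₀ : ℝ) :
    ∃ s, t₀ ≤ s ∧ φ s x ∈ V := by
  have h : p ∈ closure (flowImage φ {x} (Ici t₀)) := by
    simp only [omegaSet, mem_iInter] at hp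
    exact hp t₀
  rcases mem_closure_iff.mp h V hV hpV with ⟨y, hyV, hyF⟩
  rcases hyF with ⟨x', hx', s, hs, rfl⟩
  rcases mem_singleton_iff.mp hx' with rfl
  exact ⟨s, hs, hyV⟩

lemma flowImage_singleton_shift (φ : Flow ℝ M) (t s : ℝ) (x : M) :
    flowImage φ {φ t x} (Ici s) = flowImage φ {x} (Ici (s + t)) := by
  ext y
  constructor
  · rintro ⟨x', hx', u, hu, rfl⟩
    have hxx : x' = φ t x := hx'
    subst hxx
    exact ⟨x, rfl, u + t, add_le_add_left hu t, φ.map_add u t x⟩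
  · rintro ⟨x', hx', v, hv, rfl⟩
    refine ⟨φ t x, rfl, v - t, by have := mem_Ici.mp hv; simp only [mem_Ici]; linarith, ?_⟩
    have hxx : x' = x := hx'
    rw [hxx, ← φ.map_add, sub_add_cancel]

lemma omegaSet_shift (φ : Flow ℝ M) (t : ℝ) (x : M) :
    omegaSet φ (φ t x) = omegaSet φ x := by
  ext y
  simp only [omegaSet, mem_iInter]
  constructor
  · intro h r
    have := h (r - t)
    rwa [flowImage_singleton_shift, sub_add_cancel] at this
  · intro h s
    rw [flowImage_singleton_shift]
    exact h (s + t)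

lemma stableSet_isOpen {φ : Flow ℝ M} {K : Set M} (hnb : stableSet φ K ∈ nhdsSet K) :
    IsOpen (stableSet φ K) := by
  rw [isOpen_iff_forall_mem_open]
  intro x hx
  obtain ⟨V, hVopen, hKV, hVs⟩ := mem_nhdsSet_iff_exists.mp hnb
  obtain ⟨p, hp⟩ := hx.1
  have hpV : p ∈ V := hKV (hx.2 hp)
  obtain ⟨s, _, hsV⟩ := exists_forward_mem hp hVopen hpV 0
  refine ⟨(fun y => φ s y) ⁻¹' V, ?_, hVopen.preimage (φ.continuous continuous_const continuous_id), hsV⟩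
  intro y hy
  have hys : φ s y ∈ stableSet φ K := hVs hy
  exact ⟨(omegaSet_shift φ s y) ▸ hys.1, (omegaSet_shift φ s y) ▸ hys.2⟩

lemma stabilization_isClosed {φ : Flow ℝ M} {K : Set M} (hK : IsCompact K) :
    IsClosed (stabilization φ K) := by
  apply isClosed_of_closure_subset
  intro y hy
  by_contra hyn
  have hch : ∀ x ∈ K, ∃ U : Set M, ∃ t : ℝ, (IsOpen U ∧ x ∈ U) ∧ 0 ≤ t ∧
      y ∉ closure (flowImage φ U (Ici t)) := by
    intro x hxK
    by_contra hcon
    push_neg at hcon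
    apply hyn
    refine mem_biUnion hxK ?_
    simp only [jPlus, jPlusRel, mem_iInter]
    intro U hU t ht
    obtain ⟨hxU, V, hVopen, hUV⟩ := hU
    rw [inter_univ] at hUV
    subst hUV
    exact hcon U t ⟨hVopen, hxU⟩ ht
  choose! U t hUop ht hnc using hch
  obtain ⟨F, hFsub⟩ := hK.elim_nhds_subcover' (fun x hx => U x)
    (fun x hx => (hUop x hx).1.mem_nhds (hUop x hx).2)
  have hstab : stabilization φ K ⊆ ⋃ x ∈ F, closure (flowImage φ (U x) (Ici (t x))) := by
    rintro z hz
    obtain ⟨x', hx'K, hzJ⟩ := by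
      simpa only [stabilization, mem_iUnion] using hz
    obtain ⟨x₀, hx₀F, hx'U⟩ := by
      simpa only [mem_iUnion] using hFsub hx'K
    refine mem_biUnion hx₀F ?_
    exact jPlus_subset_closure (hUop x₀ x₀.2).1 hx'U (ht x₀ x₀.2) hzJ
  have hclosed : IsClosed (⋃ x ∈ F, closure (flowImage φ (U x) (Ici (t x)))) :=
    F.finite_toSet.isClosed_biUnion (fun x _ => isClosed_closure)
  have hymem := closure_minimal hstab hclosed hy
  obtain ⟨x₀, hx₀F, hyc⟩ := by
    simpa only [mem_iUnion] using hymem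
  exact hnc x₀ x₀.2 hyc

lemma flowImage_eq_image (φ : Flow ℝ M) (A : Set M) (S : Set ℝ) :
    flowImage φ A S = (fun p : ℝ × M => φ p.1 p.2) '' (S ×ˢ A) := by
  ext y
  constructor
  · rintro ⟨x, hx, t, htS, rfl⟩
    exact ⟨(t, x), ⟨htS, hx⟩, rfl⟩
  · rintro ⟨⟨t, x⟩, ⟨htS, hx⟩, rfl⟩
    exact ⟨x, hx, t, htS, rfl⟩

end AuxLemmas

/-- Let `φ` be a continuous flow on a connected, locally compact,
locally connected metric space `M`, and let `K` be a nonempty isolated attractor with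
only internal explosions which is purely unstable, i.e. its basin of attraction equals
its stabilization: `𝒜(K) = K̂`.  Then `K` is a global attractor (`𝒜(K) = M`) and `M`
is compact. -/
theorem purely_unstable_is_global {M : Type} [MetricSpace M] [LocallyCompactSpace M]
    [LocallyConnectedSpace M] [ConnectedSpace M]
    (φ : Flow ℝ M) (K : Set M) (hne : K.Nonempty)
    (hK : IsIsolatedAttractor φ K) (hint : OnlyInternalExplosions φ K)
    (hpure : stableSet φ K = stabilization φ K) :
    stableSet φ K = Set.univ ∧ CompactSpace M := by
  -- `stableSet φ K` is open
  have hopen : IsOpen (stableSet φ K) := stableSet_isOpen hK.2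
  -- `stableSet φ K` is closed, being equal to the stabilization
  have hKcomp : IsCompact K := hK.1.1
  have hclosed : IsClosed (stableSet φ K) := by
    rw [hpure]; exact stabilization_isClosed hKcomp
  -- nonempty
  have hKsub : K ⊆ stableSet φ K := subset_of_mem_nhdsSet hK.2
  obtain ⟨k, hk⟩ := hne
  have hne' : (stableSet φ K).Nonempty := ⟨k, hKsub hk⟩
  have huniv : stableSet φ K = Set.univ := IsClopen.eq_univ ⟨hclosed, hopen⟩ hne'
  refine ⟨huniv, ?_⟩
  -- Compactness.  Choose a compact neighbourhood `N` of `K`.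
  obtain ⟨N, hNcomp, hKiN⟩ := exists_compact_superset hKcomp
  set V : Set M := interior N with hVdef
  have hVopen : IsOpen V := isOpen_interior
  have hVN : V ⊆ N := interior_subset
  -- uniform return time to `V`
  have hreturn : ∀ w ∈ N, ∃ s, 1 ≤ s ∧ φ s w ∈ V := by
    intro w _
    have hw : w ∈ stableSet φ K := huniv ▸ mem_univ w
    obtain ⟨p, hp⟩ := hw.1
    exact exists_forward_mem hp hVopen (hKiN (hw.2 hp)) 1
  choose! s hs1 hsV using hreturn
  obtain ⟨F, hFsub⟩ := hNcomp.elim_nhds_subcover' (fun w hw => (fun y => φ (s w) y) ⁻¹' V)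
    (fun w hw => ((hVopen.preimage (φ.continuous continuous_const continuous_id)).mem_nhds
      (hsV w hw)))
  obtain ⟨T₀, hT₀⟩ := (Set.Finite.image (fun w : ↥N => s ↑w) F.finite_toSet).bddAbove
  set T : ℝ := max T₀ 1 with hTdef
  have hT1 : (1 : ℝ) ≤ T := le_max_right _ _
  -- every point of `N` returns to `V` within time `[1, T]`
  have hunif : ∀ w ∈ N, ∃ u, 1 ≤ u ∧ u ≤ T ∧ φ u w ∈ V := by
    intro w hw
    obtain ⟨w₀, hw₀F, hwU⟩ := by
      simpa only [mem_iUnion] using hFsub hw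
    refine ⟨s w₀, hs1 w₀ w₀.2, ?_, hwU⟩
    exact le_trans (hT₀ (mem_image_of_mem _ (Finset.mem_coe.mpr hw₀F))) (le_max_left _ _)
  -- the compact candidate
  set C : Set M := flowImage φ N (Icc (0 : ℝ) T) with hCdef
  have hCcomp : IsCompact C := by
    rw [hCdef, flowImage_eq_image]
    exact (isCompact_Icc.prod hNcomp).image (φ.cont')
  -- forward orbit of `V` stays in `C`
  have horbit : flowImage φ V (Ici (0 : ℝ)) ⊆ C := by
    rintro _ ⟨z, hzV, t, ht, rfl⟩
    have ht0 : (0 : ℝ) ≤ t := ht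
    set S : Set ℝ := {u | u ∈ Icc 0 t ∧ φ u z ∈ N} with hSdef
    have hSne : S.Nonempty := ⟨0, ⟨le_refl 0, ht0⟩, by rw [φ.map_zero_apply]; exact hVN hzV⟩
    have hSbdd : BddAbove S := ⟨t, fun u hu => hu.1.2⟩
    have hSclosed : IsClosed S := by
      apply IsClosed.inter isClosed_Icc
      exact IsClosed.preimage (φ.continuous continuous_id continuous_const)
        hNcomp.isClosed
    have hsSup : sSup S ∈ S := hSclosed.csSup_mem hSne hSbdd
    set σ : ℝ := sSup S with hσdef
    have hσt : σ ≤ t := hsSup.1.2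
    have hσ0 : 0 ≤ σ := hsSup.1.1
    set w : M := φ σ z with hwdef
    have hwN : w ∈ N := hsSup.2
    have hresid : t - σ ≤ T := by
      by_contra hgt
      push_neg at hgt
      obtain ⟨u, hu1, huT, huV⟩ := hunif w hwN
      have hmem : σ + u ∈ S := by
        refine ⟨⟨by linarith, by linarith⟩, ?_⟩
        have : φ (u + σ) z = φ u w := by rw [φ.map_add, hwdef]
        rw [show σ + u = u + σ by ring, this]
        exact hVN huV
      have : σ + u ≤ σ := le_csSup hSbdd hmem
      linarith
    refine ⟨w, hwN, t - σ, ⟨by linarith, hresid⟩, ?_⟩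
    rw [hwdef, ← φ.map_add, sub_add_cancel]
  -- conclude: the whole space is contained in `C`
  have hCclosed : IsClosed C := hCcomp.isClosed
  have huniv' : (Set.univ : Set M) ⊆ C := by
    intro y _
    have hy : y ∈ stabilization φ K := by
      rw [← hpure, huniv]; exact mem_univ y
    obtain ⟨x, hxK, hyJ⟩ := by
      simpa only [stabilization, mem_iUnion] using hy
    have : y ∈ closure (flowImage φ V (Ici (0 : ℝ))) :=
      jPlus_subset_closure hVopen (hKiN hxK) (le_refl 0) hyJ
    exact (closure_minimal horbit hCclosed) this
  rw [← isCompact_univ_iff]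
  exact hCcomp.of_isClosed_subset isClosed_univ huniv'
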